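/- Let A ⊂ ℤ≥0 finite with 0 ∈ A, N = #A ≥ 2, A(x) = Σ_{a∈A} x^a. Suppose A(x) has a spectrum θ₁,...,θ_{N-1} with θ₁ irrational. Then A(x) has at least N − 1 roots of modulus different from 1 (counted as distinct complex numbers). -/

import Mathlib

open Complex

lemma monic_sumXpow (A : Finset ℕ) (h0A : 0 ∈ A) (h2 : 2 ≤ A.card) :
    (∑ a ∈ A, (Polynomial.X : Polynomial ℤ) ^ a).Monic := by
  have hne : A.Nonempty := ⟨0, h0A⟩
  set m := A.max' hne with hm
  have hmA : m ∈ A := A.max'_mem hne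
  have hm1 : 1 ≤ m := by
    obtain ⟨b, hb, hb0⟩ : ∃ b ∈ A, b ≠ 0 := by
      by_contra h; push_neg at h
      have : A ⊆ {0} := fun x hx => Finset.mem_singleton.2 (h x hx)
      have := Finset.card_le_card this
      simp at this; omega
    have := A.le_max' b hb; omega
  rw [← Finset.add_sum_erase A _ hmA]
  apply Polynomial.monic_X_pow_add
  refine lt_of_le_of_lt (Polynomial.degree_sum_le _ _) ?_
  rw [Finset.sup_lt_iff (by exact_mod_cast WithBot.bot_lt_coe m)]
  intro a ha
  rw [Polynomial.degree_X_pow]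
  exact_mod_cast lt_of_le_of_ne (A.le_max' a (Finset.mem_of_mem_erase ha))
    (Finset.ne_of_mem_erase ha)

lemma isIntegral_of_sum_pow {R : Type*} [CommRing R] (A : Finset ℕ) (h0A : 0 ∈ A)
    (h2 : 2 ≤ A.card) {x : R} (hx : ∑ a ∈ A, x ^ a = 0) : IsIntegral ℤ x :=
  ⟨∑ a ∈ A, Polynomial.X ^ a, monic_sumXpow A h0A h2, by
    simpa [Polynomial.eval₂_finset_sum] using hx⟩

theorem stmt13 (A : Finset ℕ) (h0A : 0 ∈ A) (N : ℕ) (hN : N = A.card) (hN2 : 2 ≤ N)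
    (θ : Fin N → ℝ) (h0 : ∀ h : 0 < N, θ ⟨0, h⟩ = 0)
    (hinj : Function.Injective θ)
    (hIoo : ∀ j h, j ≠ ⟨0, h⟩ → θ j ∈ Set.Ioo (0 : ℝ) 1)
    (hspec : ∀ i j, i ≠ j →
      ∑ a ∈ A, Complex.exp (2 * Real.pi * Complex.I * (θ i - θ j)) ^ a = 0)
    (hirr : Irrational (θ ⟨1, lt_of_lt_of_le one_lt_two hN2⟩)) :
    ∃ S : Finset ℂ, N - 1 ≤ S.card ∧
      ∀ z ∈ S, (∑ a ∈ A, z ^ a = 0) ∧ ‖z‖ ≠ 1 := by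
  have hA2 : 2 ≤ A.card := hN ▸ hN2
  have hNpos : 0 < N := by omega
  have h1N : 1 < N := by omega
  set i0 : Fin N := ⟨0, hNpos⟩ with hi0
  set i1 : Fin N := ⟨1, h1N⟩ with hi1
  have h10 : i1 ≠ i0 := by simp [hi0, hi1, Fin.ext_iff]
  set z : Fin N → ℂ := fun j => Complex.exp (2 * Real.pi * Complex.I * (θ j)) with hz
  have hzne : ∀ j, z j ≠ 0 := fun j => Complex.exp_ne_zero _
  have hθmem : ∀ j, θ j ∈ Set.Ico (0 : ℝ) 1 := by
    intro j
    by_cases hj : j = i0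
    · rw [hj, h0 hNpos]; exact ⟨le_refl 0, one_pos⟩
    · exact ⟨(hIoo j hNpos hj).1.le, (hIoo j hNpos hj).2⟩
  have hzdiv : ∀ j k, z j / z k = Complex.exp (2 * Real.pi * Complex.I * ((θ j : ℂ) - θ k)) := by
    intro j k
    rw [hz, ← Complex.exp_sub]
    congr 1; ring
  have hroot : ∀ j k, j ≠ k → ∑ a ∈ A, (z j / z k) ^ a = 0 := by
    intro j k hjk
    rw [hzdiv]
    exact hspec j k hjk
  have h2pi : (2 * (Real.pi : ℂ) * Complex.I) ≠ 0 := Complex.two_pi_I_ne_zero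
  have hzinj : Function.Injective z := by
    intro j k hjk
    have h1 : z j / z k = 1 := by rw [hjk, div_self (hzne k)]
    rw [hzdiv, Complex.exp_eq_one_iff] at h1
    obtain ⟨n, hn⟩ := h1
    rw [mul_comm (n : ℂ) _] at hn
    have hn' : ((θ j : ℂ) - θ k) = n := mul_left_cancel₀ h2pi hn
    have hn'' : θ j - θ k = (n : ℝ) := by exact_mod_cast hn'
    have hb1 := hθmem j
    have hb2 := hθmem k
    have : (-1 : ℝ) < (n : ℝ) ∧ (n : ℝ) < 1 := by
      constructor <;> [linarith [hb1.1, hb2.2, hn''] ; linarith [hb1.2, hb2.1, hn'']]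
    have hn0 : n = 0 := by
      have h1 : (-1 : ℤ) < n := by exact_mod_cast this.1
      have h2 : n < (1 : ℤ) := by exact_mod_cast this.2
      omega
    apply hinj
    rw [hn0] at hn''
    exact sub_eq_zero.1 (by simpa using hn'')
  -- the field K
  set K : IntermediateField ℚ ℂ := IntermediateField.adjoin ℚ (Set.range z) with hK
  haveI : Finite (Set.range z) := Set.finite_range z
  haveI hFD : FiniteDimensional ℚ K := by
    apply IntermediateField.finiteDimensional_adjoin
    rintro x ⟨j, rfl⟩
    by_cases hj : j = i0
    · have : z i0 = 1 := by simp [hz, h0 hNpos, hi0]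
      rw [hj, this]; exact isIntegral_one
    · have hzj : ∑ a ∈ A, (z j) ^ a = 0 := by
        have := hroot j i0 hj
        simpa [show z i0 = 1 by simp [hz, h0 hNpos, hi0]] using this
      exact (isIntegral_of_sum_pow A h0A hA2 hzj).tower_top
  haveI : NumberField K := ⟨⟩
  set zK : Fin N → K := fun j => ⟨z j, IntermediateField.subset_adjoin ℚ _ ⟨j, rfl⟩⟩ with hzK
  have hcoe : ∀ j, (algebraMap K ℂ) (zK j) = z j := fun j => rfl
  have hKinj : Function.Injective (algebraMap K ℂ) := (algebraMap K ℂ).injective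
  have hzK0 : zK i0 = 1 := by
    apply hKinj
    simp [hcoe, hz, h0 hNpos, hi0]
  have hzKne : ∀ j, zK j ≠ 0 := by
    intro j h
    apply hzne j
    rw [← hcoe j, h, map_zero]
  have hKsum : ∀ j k, j ≠ k → ∑ a ∈ A, (zK j / zK k) ^ a = 0 := by
    intro j k hjk
    apply hKinj
    rw [map_sum, map_zero]
    simpa [map_div₀, hcoe] using hroot j k hjk
  have hz1sum : ∑ a ∈ A, zK i1 ^ a = 0 := by
    have := hKsum i1 i0 h10
    simpa [hzK0] using this
  have hint : IsIntegral ℤ (zK i1) := isIntegral_of_sum_pow A h0A hA2 hz1sum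
  -- find an embedding moving z₁ off the circle
  obtain ⟨φ, hφ⟩ : ∃ φ : K →+* ℂ, ‖φ (zK i1)‖ ≠ 1 := by
    by_contra h; push_neg at h
    obtain ⟨n, hn, hpow⟩ := NumberField.Embeddings.pow_eq_one_of_norm_eq_one K ℂ hint h
    have hz1 : z i1 ^ n = 1 := by
      have := congrArg (algebraMap K ℂ) hpow
      simpa [map_pow, hcoe] using this
    rw [hz, ← Complex.exp_nat_mul, Complex.exp_eq_one_iff] at hz1
    obtain ⟨m, hm⟩ := hz1
    have : (2 * (Real.pi : ℂ) * Complex.I) * ((n : ℂ) * θ i1) =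
        (2 * (Real.pi : ℂ) * Complex.I) * m := by linear_combination hm
    have hc : ((n : ℂ) * θ i1) = m := mul_left_cancel₀ h2pi this
    have hr : (n : ℝ) * θ i1 = (m : ℝ) := by exact_mod_cast hc
    apply hirr
    refine ⟨(m : ℚ) / (n : ℚ), ?_⟩
    have hnne : (n : ℝ) ≠ 0 := by positivity
    push_cast
    show (m : ℝ) / (n : ℝ) = θ i1
    field_simp
    linarith [hr]
  set u : Fin N → ℂ := fun j => φ (zK j) with hu
  have huinj : Function.Injective u := by
    intro j k h
    apply hzinj
    have := φ.injective h
    have := congrArg (algebraMap K ℂ) this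
    simpa [hcoe] using this
  have hune : ∀ j, u j ≠ 0 := fun j h => hzKne j (φ.injective (show φ (zK j) = φ 0 by rw [map_zero]; exact h))
  have husum : ∀ j k, j ≠ k → ∑ a ∈ A, (u j / u k) ^ a = 0 := by
    intro j k hjk
    have := congrArg φ (hKsum j k hjk)
    simpa [map_sum, map_pow, map_div₀, hu] using this
  set r : Fin N → ℝ := fun j => ‖u j‖ with hr
  have hrpos : ∀ j, 0 < r j := fun j => norm_pos_iff.2 (hune j)
  have hr0 : r i0 = 1 := by simp [hr, hu, hzK0]
  have hr1 : r i1 ≠ 1 := by simpa [hr, hu] using hφ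
  obtain ⟨k, -, hk⟩ := Finset.exists_max_image Finset.univ r ⟨i0, Finset.mem_univ _⟩
  obtain ⟨t, -, ht⟩ := Finset.exists_min_image Finset.univ r ⟨i0, Finset.mem_univ _⟩
  have hkt : r t < r k := by
    rcases lt_or_gt_of_ne hr1 with h | h
    · calc r t ≤ r i1 := ht i1 (Finset.mem_univ _)
        _ < 1 := h
        _ = r i0 := hr0.symm
        _ ≤ r k := hk i0 (Finset.mem_univ _)
    · calc r t ≤ r i0 := ht i0 (Finset.mem_univ _)
        _ = 1 := hr0
        _ < r i1 := h
        _ ≤ r k := hk i1 (Finset.mem_univ _)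
  classical
  set w : Fin N → ℂ := fun j => if r j = r k then u j / u t else u j / u k with hw
  have hwabs : ∀ j, j ≠ k → (∑ a ∈ A, (w j) ^ a = 0) ∧ ‖w j‖ ≠ 1 ∧
      ((r j = r k → 1 < ‖w j‖) ∧ (r j ≠ r k → ‖w j‖ < 1)) := by
    intro j hjk
    by_cases hcase : r j = r k
    · have hjt : j ≠ t := by
        intro h; rw [h] at hcase; exact absurd hcase (ne_of_lt hkt)
      have habs : ‖w j‖ = r j / r t := by
        show ‖(if r j = r k then u j / u t else u j / u k)‖ = r j / r t
        rw [if_pos hcase, norm_div]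
      have h1lt : 1 < ‖w j‖ := by
        rw [habs, hcase]
        rw [lt_div_iff₀ (hrpos t)]
        linarith [hkt]
      refine ⟨?_, ne_of_gt h1lt, fun _ => h1lt, fun h => absurd hcase h⟩
      simp only [hw, if_pos hcase]
      exact husum j t hjt
    · have habs : ‖w j‖ = r j / r k := by
        show ‖(if r j = r k then u j / u t else u j / u k)‖ = r j / r k
        rw [if_neg hcase, norm_div]
      have hlt1 : ‖w j‖ < 1 := by
        rw [habs, div_lt_one (hrpos k)]
        exact lt_of_le_of_ne (hk j (Finset.mem_univ _)) hcase
      refine ⟨?_, ne_of_lt hlt1, fun h => absurd h hcase, fun _ => hlt1⟩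
      simp only [hw, if_neg hcase]
      exact husum j k hjk
  refine ⟨(Finset.univ.erase k).image w, ?_, ?_⟩
  · have hinjOn : Set.InjOn w (Finset.univ.erase k) := by
      intro a ha b hb hab
      have ha' : a ≠ k := Finset.ne_of_mem_erase ha
      have hb' : b ≠ k := Finset.ne_of_mem_erase hb
      by_cases hca : r a = r k <;> by_cases hcb : r b = r k
      · simp only [hw, if_pos hca, if_pos hcb] at hab
        exact huinj ((div_left_inj' (hune t)).1 hab)
      · exfalso
        have h1 := (hwabs a ha').2.2.1 hca
        have h2 := (hwabs b hb').2.2.2 hcb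
        rw [hab] at h1; linarith
      · exfalso
        have h1 := (hwabs b hb').2.2.1 hcb
        have h2 := (hwabs a ha').2.2.2 hca
        rw [hab] at h2; linarith
      · simp only [hw, if_neg hca, if_neg hcb] at hab
        exact huinj ((div_left_inj' (hune k)).1 hab)
    rw [Finset.card_image_of_injOn hinjOn, Finset.card_erase_of_mem (Finset.mem_univ _),
      Finset.card_univ, Fintype.card_fin]
  · intro x hx
    obtain ⟨j, hj, rfl⟩ := Finset.mem_image.1 hx
    have hj' : j ≠ k := Finset.ne_of_mem_erase hj
    exact ⟨(hwabs j hj').1, (hwabs j hj').2.1⟩
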